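/- The commutant of the unilateral right shift S is a maximal abelian subalgebra of L(H): (1) any two bounded linear operators T₁, T₂ on H satisfying T₁ ∘ S = S ∘ T₁ and T₂ ∘ S = S ∘ T₂ commute with each other, i.e. T₁ ∘ T₂ = T₂ ∘ T₁; and (2) any bounded linear operator T₀ on H that commutes with every operator commuting with S itself commutes with S. -/

import Mathlib

noncomputable section

local notation "H2" => lp (fun _ : ℕ => ℂ) 2

/-- Evaluation at coordinate `k` as a continuous linear map on `ℓ²`. -/
noncomputable def lpEval (k : ℕ) : H2 →L[ℂ] ℂ :=
  LinearMap.mkContinuous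
    { toFun := fun f => f k
      map_add' := fun f g => by simp [lp.coeFn_add]
      map_smul' := fun c f => by simp [lp.coeFn_smul] }
    1
    (fun f => by
      show ‖f k‖ ≤ 1 * ‖f‖
      simpa using lp.norm_apply_le_norm (by norm_num) f k)

@[simp] lemma lpEval_apply (k : ℕ) (f : H2) : lpEval k f = f k := rfl

/-- The commutant of the unilateral right shift `S` on `H = ℓ²(ℕ, ℂ)` is a maximal
abelian subalgebra of `L(H)`: (1) any two operators commuting with `S` commute with
each other, and (2) any operator commuting with every operator in the commutant of `S`
itself commutes with `S`. -/
theorem commutant_shift_maximal_abelian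
    (S : lp (fun _ : ℕ => ℂ) 2 →L[ℂ] lp (fun _ : ℕ => ℂ) 2)
    (hS0 : ∀ f : lp (fun _ : ℕ => ℂ) 2, (S f) 0 = 0)
    (hS : ∀ f : lp (fun _ : ℕ => ℂ) 2, ∀ n : ℕ, (S f) (n + 1) = f n) :
    (∀ T₁ T₂ : lp (fun _ : ℕ => ℂ) 2 →L[ℂ] lp (fun _ : ℕ => ℂ) 2,
      T₁.comp S = S.comp T₁ → T₂.comp S = S.comp T₂ → T₁.comp T₂ = T₂.comp T₁) ∧
    (∀ T₀ : lp (fun _ : ℕ => ℂ) 2 →L[ℂ] lp (fun _ : ℕ => ℂ) 2,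
      (∀ T : lp (fun _ : ℕ => ℂ) 2 →L[ℂ] lp (fun _ : ℕ => ℂ) 2,
        T.comp S = S.comp T → T₀.comp T = T.comp T₀) →
      T₀.comp S = S.comp T₀) := by
  constructor
  · intro T₁ T₂ h₁ h₂
    -- coordinates of powers of S
    have hSapp : ∀ (n : ℕ) (f : H2) (k : ℕ),
        ((S ^ n) f) k = if h : n ≤ k then f (k - n) else (0 : ℂ) := by
      intro n
      induction n with
      | zero => intro f k; simp
      | succ n ih =>
        intro f k
        have hpow : (S ^ (n + 1)) f = S ((S ^ n) f) := by
          rw [pow_succ']; rfl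
        rcases k with _ | m
        · rw [hpow]
          rw [hS0]
          simp
        · rw [hpow, hS]
          rw [ih]
          by_cases h : n ≤ m
          · rw [dif_pos h, dif_pos (Nat.succ_le_succ h), Nat.succ_sub_succ]
          · rw [dif_neg h, dif_neg (fun hc => h (Nat.succ_le_succ_iff.mp hc))]
    -- commutation with powers
    have hcommpow : ∀ (T : H2 →L[ℂ] H2), T.comp S = S.comp T →
        ∀ (n : ℕ) (f : H2), T ((S ^ n) f) = (S ^ n) (T f) := by
      intro T hT n
      induction n with
      | zero => intro f; simp
      | succ n ih =>
        intro f
        have hpow : ∀ g : H2, (S ^ (n + 1)) g = S ((S ^ n) g) := by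
          intro g; rw [pow_succ']; rfl
        rw [hpow, hpow, ← ih f]
        exact ContinuousLinearMap.ext_iff.mp hT ((S ^ n) f)
    set e₀ : H2 := lp.single 2 0 (1 : ℂ) with he₀
    -- S^n e₀ = single n 1
    have hSe : ∀ n : ℕ, (S ^ n) e₀ = lp.single 2 n (1 : ℂ) := by
      intro n
      apply lp.ext
      funext k
      rw [hSapp]
      by_cases h : n ≤ k
      · rw [dif_pos h, he₀]
        by_cases hk : k = n
        · subst hk
          rw [Nat.sub_self]
          rw [lp.single_apply_self, lp.single_apply_self]
        · rw [lp.single_apply_ne 2 n 1 hk]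
          have : k - n ≠ 0 := fun hc => hk (Nat.le_antisymm (Nat.sub_eq_zero_iff_le.mp hc) h)
          rw [lp.single_apply_ne 2 0 1 this]
      · rw [dif_neg h, lp.single_apply_ne 2 n 1 (fun hc => h (hc ▸ le_refl k))]
    have hsingle : ∀ (n : ℕ) (c : ℂ), lp.single 2 n c = c • (S ^ n) e₀ := by
      intro n c
      rw [hSe n, ← lp.single_smul, smul_eq_mul, mul_one]
    haveI : Fact ((1 : ENNReal) ≤ 2) := fact_one_le_two_ennreal
    -- determination lemma
    have hdet : ∀ (T : H2 →L[ℂ] H2), T.comp S = S.comp T → ∀ f : H2,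
        HasSum (fun n : ℕ => f n • (S ^ n) (T e₀)) (T f) := by
      intro T hT f
      have h1 : HasSum (fun n : ℕ => lp.single 2 n (f n)) f :=
        lp.hasSum_single (by norm_num) f
      have h2 := h1.mapL T
      have heq : (fun n : ℕ => T (lp.single 2 n (f n)))
          = fun n : ℕ => f n • (S ^ n) (T e₀) := by
        funext n
        rw [hsingle, map_smul, hcommpow T hT]
      rwa [heq] at h2
    -- coordinate formula
    have hcoord : ∀ (T : H2 →L[ℂ] H2), T.comp S = S.comp T → ∀ (f : H2) (k : ℕ),
        (T f) k = ∑ n ∈ Finset.range (k + 1), f n * (T e₀) (k - n) := by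
      intro T hT f k
      have h1 := (hdet T hT f).mapL (lpEval k)
      have heq : (fun n : ℕ => lpEval k (f n • (S ^ n) (T e₀)))
          = fun n : ℕ => if n ∈ Finset.range (k + 1) then f n * (T e₀) (k - n) else 0 := by
        funext n
        rw [map_smul]
        simp only [lpEval_apply, smul_eq_mul, Finset.mem_range, Nat.lt_succ_iff]
        rw [hSapp]
        by_cases h : n ≤ k
        · rw [dif_pos h, if_pos h]
        · rw [dif_neg h, if_neg h, mul_zero]
      rw [heq] at h1
      have h2 : HasSum (fun n : ℕ => if n ∈ Finset.range (k + 1)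
            then f n * (T e₀) (k - n) else 0)
          (∑ n ∈ Finset.range (k + 1), f n * (T e₀) (k - n)) := by
        have h3 := hasSum_sum_of_ne_finset_zero (s := Finset.range (k + 1)) (L := SummationFilter.unconditional ℕ)
          (f := fun n : ℕ => if n ∈ Finset.range (k + 1)
            then f n * (T e₀) (k - n) else 0) (fun n hn => if_neg hn)
        have h4 : (∑ n ∈ Finset.range (k + 1), if n ∈ Finset.range (k + 1)
              then f n * (T e₀) (k - n) else 0)
            = ∑ n ∈ Finset.range (k + 1), f n * (T e₀) (k - n) :=
          Finset.sum_congr rfl fun n hn => if_pos hn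
        rwa [h4] at h3
      exact h1.unique h2
    -- the key symmetry on e₀
    have hkey : T₁ (T₂ e₀) = T₂ (T₁ e₀) := by
      apply lp.ext
      funext k
      rw [hcoord T₁ h₁ (T₂ e₀) k, hcoord T₂ h₂ (T₁ e₀) k]
      have := Finset.sum_range_reflect
        (fun n : ℕ => (T₁ e₀) n * (T₂ e₀) (k - n)) (k + 1)
      rw [← this]
      apply Finset.sum_congr rfl
      intro n hn
      have hnk : n ≤ k := Nat.lt_succ_iff.mp (Finset.mem_range.mp hn)
      have h5 : k + 1 - 1 - n = k - n := by omega
      have h6 : k - (k - n) = n := Nat.sub_sub_self hnk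
      rw [h5, h6, mul_comm]
    -- conclude via the difference operator
    set D : H2 →L[ℂ] H2 := T₁.comp T₂ - T₂.comp T₁ with hD
    have hDcomm : D.comp S = S.comp D := by
      have k1 : (T₁.comp T₂).comp S = S.comp (T₁.comp T₂) := by
        rw [ContinuousLinearMap.comp_assoc, h₂, ← ContinuousLinearMap.comp_assoc, h₁,
          ContinuousLinearMap.comp_assoc]
      have k2 : (T₂.comp T₁).comp S = S.comp (T₂.comp T₁) := by
        rw [ContinuousLinearMap.comp_assoc, h₁, ← ContinuousLinearMap.comp_assoc, h₂,
          ContinuousLinearMap.comp_assoc]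
      rw [hD, ContinuousLinearMap.sub_comp, ContinuousLinearMap.comp_sub, k1, k2]
    have hDe₀ : D e₀ = 0 := by
      simp only [hD, ContinuousLinearMap.sub_apply, ContinuousLinearMap.comp_apply]
      rw [hkey, sub_self]
    have hDzero : ∀ f : H2, D f = 0 := by
      intro f
      have h1 := hdet D hDcomm f
      rw [hDe₀] at h1
      simp only [map_zero, smul_zero] at h1
      exact (hasSum_zero.unique h1).symm
    apply ContinuousLinearMap.ext
    intro f
    have := hDzero f
    rw [hD] at this
    have h7 : T₁ (T₂ f) - T₂ (T₁ f) = 0 := this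
    simpa [sub_eq_zero, ContinuousLinearMap.comp_apply] using h7
  · intro T₀ h
    exact h S rfl
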